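/- Let W ⊆ ℝⁿ be compact convex with 0 ∈ W, and A Schur stable with induced norm γ = ‖A‖ < 1. Then the sequence E_N = ⨁_{i=0}^{N-1} AⁱW is a Cauchy sequence in the Hausdorff metric on nonempty compact subsets of ℝⁿ, and hence converges to a compact set E_∞. -/

import Mathlib

open Pointwise Metric Filter Topology

/-- With `W` compact convex containing `0` and `‖A‖ = γ < 1`,
the truncated Minkowski sums `E_N = ⨁_{i=0}^{N-1} Aⁱ W` form a Cauchy sequence
in the Hausdorff metric and converge to a compact set `E_∞`. -/
theorem truncated_cauchy_and_converges
    {E : Type*} [NormedAddCommGroup E] [NormedSpace ℝ E] [FiniteDimensional ℝ E]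
    (A : E →L[ℝ] E) (γ : ℝ) (hγ : ‖A‖ = γ) (hγ1 : γ < 1)
    (W : Set E) (hW : IsCompact W) (hWc : Convex ℝ W) (h0W : (0 : E) ∈ W) :
    (∀ ε > (0 : ℝ), ∃ N₀ : ℕ, ∀ m n : ℕ, N₀ ≤ m → N₀ ≤ n →
        hausdorffDist (∑ i ∈ Finset.range m, (A ^ i) '' W)
          (∑ i ∈ Finset.range n, (A ^ i) '' W) < ε) ∧
    ∃ Einf : Set E, IsCompact Einf ∧ Einf.Nonempty ∧
      Tendsto (fun N => hausdorffDist (∑ i ∈ Finset.range N, (A ^ i) '' W) Einf)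
        atTop (𝓝 0) := by
  have hγ0 : 0 ≤ γ := hγ ▸ norm_nonneg A
  obtain ⟨C, hC⟩ := hW.isBounded.exists_norm_le
  have hC0 : 0 ≤ C := le_trans (norm_nonneg _) (hC 0 h0W)
  have hApow : ∀ (i : ℕ) (w : E), ‖(A ^ i) w‖ ≤ γ ^ i * ‖w‖ := by
    intro i
    induction i with
    | zero => intro w; simp
    | succ i ih =>
      intro w
      have : (A ^ (i + 1)) w = (A ^ i) (A w) := by
        rw [pow_succ]; rfl
      rw [this]
      calc ‖(A ^ i) (A w)‖ ≤ γ ^ i * ‖A w‖ := ih (A w)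
      _ ≤ γ ^ i * (γ * ‖w‖) := by
          apply mul_le_mul_of_nonneg_left _ (pow_nonneg hγ0 i)
          simpa [hγ] using A.le_opNorm w
      _ = γ ^ (i + 1) * ‖w‖ := by ring
  have hpow : ∀ (i : ℕ) (w : E), w ∈ W → ‖(A ^ i) w‖ ≤ γ ^ i * C := by
    intro i w hw
    exact (hApow i w).trans (mul_le_mul_of_nonneg_left (hC w hw) (pow_nonneg hγ0 i))
  -- basic facts on terms
  set T : ℕ → Set E := fun i => (A ^ i) '' W with hT
  have hTc : ∀ i, IsCompact (T i) := fun i => hW.image (A ^ i).continuous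
  have hT0 : ∀ i, (0 : E) ∈ T i := fun i => ⟨0, h0W, by simp⟩
  -- partial sums
  set S : ℕ → Set E := fun n => ∑ i ∈ Finset.range n, T i with hS
  have hSc : ∀ n, IsCompact (S n) := by
    intro n
    induction n with
    | zero => simp [hS]
    | succ n ih =>
      rw [hS]
      simp only [Finset.sum_range_succ]
      exact ih.add (hTc n)
  have hS0 : ∀ n, (0 : E) ∈ S n := by
    intro n
    induction n with
    | zero => simp [hS]
    | succ n ih =>
      rw [hS]
      simp only [Finset.sum_range_succ]
      simpa using Set.add_mem_add ih (hT0 n)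
  -- package as NonemptyCompacts
  let SC : ℕ → TopologicalSpace.NonemptyCompacts E := fun n =>
    ⟨⟨S n, hSc n⟩, ⟨0, hS0 n⟩⟩
  -- successive distance bound
  have hd : ∀ n, dist (SC n) (SC (n + 1)) ≤ C * γ ^ n := by
    intro n
    rw [NonemptyCompacts.dist_eq]
    refine hausdorffDist_le_of_mem_dist (by positivity) ?_ ?_
    · intro x hx
      refine ⟨x + 0, ?_, by simp; positivity⟩
      rw [show (SC (n+1) : Set E) = S n + T n by
        simp only [SC, hS, TopologicalSpace.NonemptyCompacts.coe_mk,
          TopologicalSpace.Compacts.coe_mk, Finset.sum_range_succ]]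
      exact Set.add_mem_add hx (hT0 n)
    · intro z hz
      have hz' : z ∈ S n + T n := by
        rwa [show (SC (n+1) : Set E) = S n + T n by
          simp only [SC, hS, TopologicalSpace.NonemptyCompacts.coe_mk,
            TopologicalSpace.Compacts.coe_mk, Finset.sum_range_succ]] at hz
      obtain ⟨x, hx, y, hy, rfl⟩ := hz'
      refine ⟨x, hx, ?_⟩
      obtain ⟨w, hw, rfl⟩ := hy
      rw [dist_eq_norm]
      simpa [mul_comm] using hpow n w hw
  have hcauchy : CauchySeq SC :=
    cauchySeq_of_le_geometric γ C hγ1 hd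
  obtain ⟨L, hL⟩ := cauchySeq_tendsto_of_complete hcauchy
  constructor
  · intro ε hε
    obtain ⟨N₀, hN₀⟩ := Metric.cauchySeq_iff.1 hcauchy ε hε
    exact ⟨N₀, fun m n hm hn => by
      have := hN₀ m hm n hn
      rwa [NonemptyCompacts.dist_eq] at this⟩
  · refine ⟨L, L.isCompact, L.nonempty, ?_⟩
    have : Tendsto (fun N => dist (SC N) L) atTop (𝓝 0) :=
      tendsto_iff_dist_tendsto_zero.1 hL
    simp only [NonemptyCompacts.dist_eq] at this
    exact this
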